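/- For an elementary doctrine P : C^op → InfSL whose base category C has a terminal object, condition (ii) of the elementary structure (existence of left adjoints to P_e for the maps e = ⟨pr1, pr2, pr2⟩ : X × A → X × A × A) implies condition (i) (existence of a left adjoint to P_{⟨id_A, id_A⟩} given by α ↦ P_{pr1}(α) ∧ δ_A). -/

import Mathlib

open CategoryTheory CategoryTheory.Limits

universe u v w

/-- Layer 0: an indexed family of inf-semilattices over a category. -/
structure DocL0 (C : Type u) [Category.{v} C] where
  obj : C → Type w
  semi : ∀ A : C, SemilatticeInf (obj A)

attribute [instance] DocL0.semi

/-- Layer 1: fibrewise top elements. -/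
structure DocL1 (C : Type u) [Category.{v} C] extends DocL0.{u, v, w} C where
  otop : ∀ A : C, OrderTop (obj A)

attribute [instance] DocL1.otop

/-- A doctrine: an indexed inf-semilattice `P : Cᵒᵖ → InfSL`. -/
structure Doctrine (C : Type u) [Category.{v} C] extends DocL1.{u, v, w} C where
  map : ∀ {A B : C}, (A ⟶ B) → obj B → obj A
  map_id : ∀ (A : C) (x : obj A), map (𝟙 A) x = x
  map_comp : ∀ {A B D : C} (f : A ⟶ B) (g : B ⟶ D) (x : obj D),
    map (f ≫ g) x = map f (map g x)
  map_mono : ∀ {A B : C} (f : A ⟶ B), Monotone (map f)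
  map_inf : ∀ {A B : C} (f : A ⟶ B) (x y : obj B),
    map f (x ⊓ y) = map f x ⊓ map f y
  map_top : ∀ {A B : C} (f : A ⟶ B), map f (⊤ : obj B) = (⊤ : obj A)
/-- The data of an elementary doctrine: an indexed inf-semilattice together
with fibered equalities `δ_A ∈ P(A×A)`; the adjunction conditions (i) and
(ii) are stated separately below. -/
structure ElemData (C : Type u) [Category.{v} C] [HasBinaryProducts C] extends
    Doctrine.{u, v, w} C where
  delta : ∀ A : C, obj (A ⨯ A)

namespace ElemData

variable {C : Type u} [Category.{v} C] [HasBinaryProducts C]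

/-- Condition (i): `α ↦ P_{pr₁}(α) ∧ δ_A` is left adjoint to
`P_{⟨id_A,id_A⟩} : P(A×A) → P(A)`. -/
def CondI (P : ElemData.{u, v, w} C) : Prop :=
  ∀ {A : C} (α : P.obj A) (β : P.obj (A ⨯ A)),
    P.map prod.fst α ⊓ P.delta A ≤ β ↔ α ≤ P.map (diag A) β

/-- Condition (ii): for `e = ⟨pr₁,pr₂,pr₂⟩ : X×A → X×A×A`, the assignment
`α ↦ P_{⟨pr₁,pr₂⟩}(α) ∧ P_{⟨pr₂,pr₃⟩}(δ_A)` is left adjoint to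
`P_e : P(X×A×A) → P(X×A)`. -/
def CondII (P : ElemData.{u, v, w} C) : Prop :=
  ∀ {X A : C} (α : P.obj (X ⨯ A)) (β : P.obj ((X ⨯ A) ⨯ A)),
    P.map prod.fst α ⊓ P.map (prod.lift (prod.fst ≫ prod.snd) prod.snd) (P.delta A) ≤ β ↔
      α ≤ P.map (prod.lift (𝟙 (X ⨯ A)) prod.snd) β

end ElemData


theorem ElemData.map_le_map_iff {C : Type u} [Category.{v} C] [HasBinaryProducts C]
    (P : ElemData.{u, v, w} C) {A B : C} (f : A ⟶ B) (s : B ⟶ A) (hs : s ≫ f = 𝟙 B)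
    (x y : P.obj B) : P.map f x ≤ P.map f y ↔ x ≤ y := by
  constructor
  · intro hxy
    have := P.map_mono s hxy
    rwa [← P.map_comp, ← P.map_comp, hs, P.map_id, P.map_id] at this
  · exact fun hxy => P.map_mono f hxy

/-- if the base category has a terminal object, condition (ii)
of the elementary structure implies condition (i). -/
theorem condII_implies_condI
    {C : Type u} [Category.{v} C] [HasBinaryProducts C] [HasTerminal C]
    (P : ElemData.{u, v, w} C) (h : ElemData.CondII P) : ElemData.CondI P := by
  intro A α β
  let T := ⊤_ C
  let f : (T ⨯ A) ⨯ A ⟶ A ⨯ A := prod.lift (prod.fst ≫ prod.snd) prod.snd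
  let j : A ⨯ A ⟶ (T ⨯ A) ⨯ A :=
    prod.lift (prod.fst ≫ prod.lift (terminal.from A) (𝟙 A)) prod.snd
  let i : A ⟶ T ⨯ A := prod.lift (terminal.from A) (𝟙 A)
  have hji : j ≫ f = 𝟙 (A ⨯ A) := by
    apply Limits.prod.hom_ext <;> simp [f, j, prod.lift_fst, prod.lift_snd, prod.lift_fst_assoc, prod.lift_snd_assoc]
  have his : i ≫ (prod.snd : T ⨯ A ⟶ A) = 𝟙 A := by simp [i, prod.lift_fst, prod.lift_snd, prod.lift_fst_assoc, prod.lift_snd_assoc]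
  have key := h (X := T) (P.map prod.snd α) (P.map f β)
  have hfst : f ≫ prod.fst = (prod.fst : (T ⨯ A) ⨯ A ⟶ T ⨯ A) ≫ prod.snd := by
    simp [f, prod.lift_fst, prod.lift_snd, prod.lift_fst_assoc, prod.lift_snd_assoc]
  have hdiag : prod.lift (𝟙 (T ⨯ A)) prod.snd ≫ f = (prod.snd : T ⨯ A ⟶ A) ≫ diag A := by
    apply Limits.prod.hom_ext <;> simp [f, diag, prod.lift_fst, prod.lift_snd, prod.lift_fst_assoc, prod.lift_snd_assoc]
  rw [← P.map_le_map_iff f j hji (P.map prod.fst α ⊓ P.delta A) β, P.map_inf,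
    ← P.map_comp, hfst, P.map_comp,
    ← P.map_le_map_iff prod.snd i his α (P.map (diag A) β),
    ← P.map_comp prod.snd (diag A) β, ← hdiag, P.map_comp]
  exact key
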